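/- Let f : H → (-∞,∞] and g : G → (-∞,∞] be proper closed convex functions and A : H → G a continuous linear map. Suppose y* minimizes y ↦ (f* ∘ A*)*(y) + g(y), and there exists q with −q ∈ ∂g(y*) and y* ∈ ∂(f* ∘ A*)(q). If x* minimizes f over {x : A x = y*} and strong duality holds for this constrained problem (with dual optimum q), then x* is a minimizer of x ↦ f(x) + g(A x). -/

import Mathlib

noncomputable def econj {E : Type*} [NormedAddCommGroup E] [InnerProductSpace ℝ E]
    (f : E → EReal) (v : E) : EReal :=
  ⨆ x : E, ((inner ℝ v x : ℝ) : EReal) - f x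

def EConvex {E : Type*} [NormedAddCommGroup E] [InnerProductSpace ℝ E] (f : E → EReal) : Prop :=
  ∀ x y : E, ∀ a b : ℝ, 0 ≤ a → 0 ≤ b → a + b = 1 →
    f (a • x + b • y) ≤ (a : EReal) * f x + (b : EReal) * f y

def Proper {E : Type*} (f : E → EReal) : Prop :=
  (∃ x, f x ≠ ⊤) ∧ ∀ x, f x ≠ ⊥

/-- `v ∈ ∂f(x)`: the convex subdifferential. -/
def SubdiffAt {E : Type*} [NormedAddCommGroup E] [InnerProductSpace ℝ E]
    (f : E → EReal) (x v : E) : Prop :=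
  ∀ y : E, f x + ((inner ℝ v (y - x) : ℝ) : EReal) ≤ f y

/-- if `y*` minimizes `(f*∘A*)* + g`, `−q ∈ ∂g(y*)`, `y* ∈ ∂(f*∘A*)(q)`,
and `x*` minimizes `f` over `{x : A x = y*}` with strong duality (dual optimum `q`),
then `x*` minimizes `f + g∘A`. -/
theorem stmt12 {H G : Type*} [NormedAddCommGroup H] [InnerProductSpace ℝ H] [CompleteSpace H]
    [NormedAddCommGroup G] [InnerProductSpace ℝ G] [CompleteSpace G]
    (f : H → EReal) (hf : Proper f) (hfc : LowerSemicontinuous f) (hfconv : EConvex f)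
    (g : G → EReal) (hg : Proper g) (hgc : LowerSemicontinuous g) (hgconv : EConvex g)
    (A : H →L[ℝ] G) (ys : G)
    (hymin : ∀ y : G,
      econj (fun v : G => econj f (ContinuousLinearMap.adjoint A v)) ys + g ys
        ≤ econj (fun v : G => econj f (ContinuousLinearMap.adjoint A v)) y + g y)
    (q : G) (hq1 : SubdiffAt g ys (-q))
    (hq2 : SubdiffAt (fun v : G => econj f (ContinuousLinearMap.adjoint A v)) q ys)
    (xs : H) (hxfeas : A xs = ys)
    (hxmin : ∀ x : H, A x = ys → f xs ≤ f x)
    (hstrong : f xs = -econj f (ContinuousLinearMap.adjoint A q) + ((inner ℝ q ys : ℝ) : EReal)) :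
    ∀ x : H, f xs + g (A xs) ≤ f x + g (A x) := by

  intro x
  rw [hxfeas]
  set v := ContinuousLinearMap.adjoint A q
  -- econj f v is a real number c
  have hne_bot : econj f v ≠ ⊥ := by
    obtain ⟨x0, hx0⟩ := hf.1
    have hx0b := hf.2 x0
    lift f x0 to ℝ using ⟨hx0, hx0b⟩ with r0 hr0
    have : ((inner ℝ v x0 : ℝ) : EReal) - (r0 : EReal) ≤ econj f v := by
      simpa [← hr0, econj] using le_iSup (fun z => ((inner ℝ v z : ℝ) : EReal) - f z) x0
    intro h
    rw [h] at this
    simp only [← EReal.coe_sub] at this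
    exact (EReal.coe_ne_bot _) (le_bot_iff.mp this)
  have hne_top : econj f v ≠ ⊤ := by
    intro h
    rw [h] at hstrong
    simp only [EReal.neg_top] at hstrong
    rw [EReal.bot_add] at hstrong
    exact hf.2 xs hstrong
  lift econj f v to ℝ using ⟨hne_top, hne_bot⟩ with c hc
  -- f xs is the real value ⟨q, ys⟩ - c
  have hfxs : f xs = ((inner ℝ q ys - c : ℝ) : EReal) := by
    rw [hstrong, ← EReal.coe_neg, ← EReal.coe_add]
    congr 1
    ring
  -- key inequality: ⟨q, A x⟩ - c ≤ f x  (as EReal)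
  have hkey : ((inner ℝ q (A x) - c : ℝ) : EReal) ≤ f x := by
    have h1 : ((inner ℝ v x : ℝ) : EReal) - f x ≤ (c : EReal) := by
      rw [hc]
      exact le_iSup (fun z => ((inner ℝ v z : ℝ) : EReal) - f z) x
    have hip : (inner ℝ v x : ℝ) = (inner ℝ q (A x) : ℝ) := by
      exact ContinuousLinearMap.adjoint_inner_left A x q
    rw [hip] at h1
    rcases eq_or_ne (f x) ⊤ with hfx | hfx
    · rw [hfx]; exact le_top
    · lift f x to ℝ using ⟨hfx, hf.2 x⟩ with r hr
      rw [← EReal.coe_sub, EReal.coe_le_coe_iff] at h1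
      rw [EReal.coe_le_coe_iff]
      linarith
  rcases eq_or_ne (g (A x)) ⊤ with hgx | hgx
  · rw [hgx]
    rcases eq_or_ne (f x) ⊥ with h | h
    · exact absurd h (hf.2 x)
    · rw [EReal.add_top_of_ne_bot h]; exact le_top
  · lift g (A x) to ℝ using ⟨hgx, hg.2 (A x)⟩ with b hb
    have hsub := hq1 (A x)
    rw [← hb] at hsub
    have hgys_top : g ys ≠ ⊤ := by
      intro h
      rw [h, EReal.top_add_of_ne_bot (EReal.coe_ne_bot _)] at hsub
      exact (EReal.coe_ne_top b) (top_le_iff.mp hsub)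
    lift g ys to ℝ using ⟨hgys_top, hg.2 ys⟩ with a ha
    rw [← EReal.coe_add, EReal.coe_le_coe_iff] at hsub
    have hipn : (inner ℝ (-q) (A x - ys) : ℝ) = -(inner ℝ q (A x) : ℝ) + (inner ℝ q ys : ℝ) := by
      rw [inner_neg_left, inner_sub_right]; ring
    rw [hipn] at hsub
    rcases eq_or_ne (f x) ⊤ with hfx | hfx
    · rw [hfx, EReal.top_add_of_ne_bot (EReal.coe_ne_bot b)]; exact le_top
    · lift f x to ℝ using ⟨hfx, hf.2 x⟩ with r hr
      rw [EReal.coe_le_coe_iff] at hkey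
      rw [hfxs, ← EReal.coe_add, ← EReal.coe_add, EReal.coe_le_coe_iff]
      linarith
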